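/- arXiv:2602.10760 — 3 statements merged into one kernel-verified Lean document; each statement's English description precedes it below -/
import Mathlib

section
/- For vectors u, v in a real inner product space and any real r ≥ 2, there exists a constant c_r depending only on r such that ‖u+v‖^r − ‖u‖^r ≤ r⟨u,v⟩‖u‖^(r−2) + c_r(‖v‖^r + ‖v‖²‖u‖^(r−2)). -/
open Real

lemma bern_lower {p : ℝ} (hp : 1 ≤ p) {x y : ℝ} (hy : 0 < y) (hx : 0 ≤ x) :
    y ^ p + p * y ^ (p - 1) * (x - y) ≤ x ^ p := by
  have hs : -1 ≤ x / y - 1 := by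
    have : 0 ≤ x / y := div_nonneg hx hy.le
    linarith
  have hb := one_add_mul_self_le_rpow_one_add hs hp
  rw [add_sub_cancel, Real.div_rpow hx hy.le] at hb
  have hyp : (0:ℝ) < y ^ p := rpow_pos_of_pos hy p
  have h2 : (1 + p * (x / y - 1)) * y ^ p ≤ x ^ p := by
    rw [← le_div_iff₀ hyp]
    exact hb
  refine le_trans (le_of_eq ?_) h2
  have hy1 : y ^ (p - 1) = y ^ p / y := by
    rw [Real.rpow_sub hy, Real.rpow_one]
  rw [hy1]
  field_simp

lemma bern_concave {q : ℝ} (hq0 : 0 ≤ q) (hq1 : q ≤ 1) {x y : ℝ} (hy : 0 < y) (hx : 0 ≤ x) :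
    x ^ q ≤ y ^ q + q * y ^ (q - 1) * (x - y) := by
  have hs : -1 ≤ x / y - 1 := by
    have : 0 ≤ x / y := div_nonneg hx hy.le
    linarith
  have hb := rpow_one_add_le_one_add_mul_self hs hq0 hq1
  rw [add_sub_cancel, Real.div_rpow hx hy.le] at hb
  have hyp : (0:ℝ) < y ^ q := rpow_pos_of_pos hy q
  have h2 : x ^ q ≤ (1 + q * (x / y - 1)) * y ^ q := by
    rw [← div_le_iff₀ hyp]
    exact hb
  refine h2.trans (le_of_eq ?_)
  have hy1 : y ^ (q - 1) = y ^ q / y := by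
    rw [Real.rpow_sub hy, Real.rpow_one]
  rw [hy1]
  field_simp


set_option maxHeartbeats 2000000 in
lemma key {p : ℝ} (hp : 1 ≤ p) {y x : ℝ} (hy : 0 < y) (hx : 0 ≤ x) :
    x ^ p - y ^ p - p * y ^ (p - 1) * (x - y) ≤
      (2 ^ p * (p * p + p + 1) + 3 * 3 ^ p) * ((x - y) ^ 2 * (max y |x - y|) ^ (p - 2)) := by
  obtain ⟨δ, hδd⟩ : ∃ δ, δ = x - y := ⟨_, rfl⟩
  obtain ⟨C, hC⟩ : ∃ C, C = (2:ℝ) ^ p * (p * p + p + 1) + 3 * 3 ^ p := ⟨_, rfl⟩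
  obtain ⟨M, hMdef⟩ : ∃ M, M = max y |δ| := ⟨_, rfl⟩
  rw [← hδd, ← hC, ← hMdef]
  have hxd : x = y + δ := by rw [hδd]; ring
  have hA2 : (2:ℝ) ≤ 2 ^ p := by
    calc (2:ℝ) = 2 ^ (1:ℝ) := (Real.rpow_one 2).symm
    _ ≤ 2 ^ p := Real.rpow_le_rpow_of_exponent_le one_le_two hp
  have hB3 : (3:ℝ) ≤ 3 ^ p := by
    calc (3:ℝ) = 3 ^ (1:ℝ) := (Real.rpow_one 3).symm
    _ ≤ 3 ^ p := Real.rpow_le_rpow_of_exponent_le (by norm_num) hp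
  have hMy : y ≤ M := hMdef ▸ le_max_left _ _
  have hMδ : |δ| ≤ M := hMdef ▸ le_max_right _ _
  have hM : 0 < M := lt_of_lt_of_le hy hMy
  have hMp : 0 ≤ M ^ (p - 2) := Real.rpow_nonneg hM.le _
  have hqM : (0:ℝ) ≤ δ ^ 2 * M ^ (p - 2) := by positivity
  have habs1 : -|δ| ≤ δ := neg_abs_le δ
  have habs2 : δ ≤ |δ| := le_abs_self δ
  by_cases hp2 : p ≤ 2
  · -- 1 ≤ p ≤ 2
    by_cases hδ : |δ| ≤ y / 2
    · -- small perturbation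
      have hxy2 : y / 2 ≤ x := by rw [hxd]; linarith
      have hxpos : 0 < x := lt_of_lt_of_le (by linarith) hxy2
      have hM2 : M = y := by rw [hMdef]; exact max_eq_left (by linarith)
      have hb := bern_lower hp hxpos hy.le
      have h1' : x ^ p - y ^ p - p * y ^ (p - 1) * δ ≤
          p * δ * (x ^ (p-1) - y ^ (p-1)) := by
        have hyx : y - x = -δ := by rw [hxd]; ring
        rw [hyx] at hb
        nlinarith [hb]
      have hq0 : 0 ≤ p - 1 := by linarith
      have hq1 : p - 1 ≤ 1 := by linarith
      have hhalf : (0:ℝ) < y / 2 := by linarith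
      have hee : p - 1 - 1 = p - 2 := by ring
      have hkey2 : p * δ * (x ^ (p-1) - y ^ (p-1)) ≤
          p * (p-1) * (y/2) ^ (p - 2) * δ ^ 2 := by
        rcases le_or_gt 0 δ with hd | hd
        · have hcon := bern_concave hq0 hq1 hy hx
          rw [hee, show x - y = δ by rw [hxd]; ring] at hcon
          have hmono : y ^ (p - 2) ≤ (y/2) ^ (p - 2) :=
            Real.rpow_le_rpow_of_nonpos hhalf (by linarith) (by linarith)
          have hd2 : x ^ (p-1) - y ^ (p-1) ≤ (p-1) * (y/2) ^ (p - 2) * δ := by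
            nlinarith [hcon, mul_le_mul_of_nonneg_right
              (mul_le_mul_of_nonneg_left hmono hq0) hd]
          calc p * δ * (x ^ (p-1) - y ^ (p-1)) ≤ p * δ * ((p-1) * (y/2) ^ (p - 2) * δ) := by
                apply mul_le_mul_of_nonneg_left hd2 (by positivity)
          _ = p * (p-1) * (y/2) ^ (p - 2) * δ ^ 2 := by ring
        · have hcon := bern_concave hq0 hq1 hxpos hy.le
          rw [hee, show y - x = -δ by rw [hxd]; ring] at hcon
          have hmono : x ^ (p - 2) ≤ (y/2) ^ (p - 2) :=
            Real.rpow_le_rpow_of_nonpos hhalf hxy2 (by linarith)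
          have hd2 : y ^ (p-1) - x ^ (p-1) ≤ (p-1) * (y/2) ^ (p - 2) * (-δ) := by
            nlinarith [hcon, mul_le_mul_of_nonneg_right
              (mul_le_mul_of_nonneg_left hmono hq0) (by linarith : (0:ℝ) ≤ -δ)]
          calc p * δ * (x ^ (p-1) - y ^ (p-1)) = p * (-δ) * (y ^ (p-1) - x ^ (p-1)) := by ring
          _ ≤ p * (-δ) * ((p-1) * (y/2) ^ (p - 2) * (-δ)) := by
                apply mul_le_mul_of_nonneg_left hd2 (by nlinarith)
          _ = p * (p-1) * (y/2) ^ (p - 2) * δ ^ 2 := by ring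
      have h3 : (y/2) ^ (p - 2) ≤ 2 * M ^ (p - 2) := by
        rw [hM2, Real.div_rpow hy.le (by norm_num : (0:ℝ) ≤ 2),
          div_le_iff₀ (by positivity : (0:ℝ) < 2 ^ (p-2))]
        have h2e : (1:ℝ) ≤ 2 * 2 ^ (p - 2) := by
          have he : (2:ℝ) * 2 ^ (p-2) = 2 ^ (p - 1) := by
            rw [show (2:ℝ) * 2 ^ (p-2) = 2 ^ (1:ℝ) * 2 ^ (p-2) by rw [Real.rpow_one],
              ← Real.rpow_add (by norm_num)]
            ring_nf
          rw [he, show (1:ℝ) = 2 ^ (0:ℝ) by simp]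
          exact Real.rpow_le_rpow_of_exponent_le one_le_two (by linarith)
        nlinarith [Real.rpow_nonneg hy.le (p-2),
          Real.rpow_nonneg (show (0:ℝ) ≤ 2 by norm_num) (p-2)]
      have hCge : p * (p-1) * 2 ≤ C := by rw [hC]; nlinarith
      have hgoal : x ^ p - y ^ p - p * y ^ (p - 1) * δ ≤ C * (δ ^ 2 * M ^ (p - 2)) := by
        calc x ^ p - y ^ p - p * y ^ (p - 1) * δ
            ≤ p * (p-1) * (y/2) ^ (p - 2) * δ ^ 2 := h1'.trans hkey2
          _ ≤ p * (p-1) * (2 * M ^ (p - 2)) * δ ^ 2 := by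
              apply mul_le_mul_of_nonneg_right _ (sq_nonneg δ)
              exact mul_le_mul_of_nonneg_left h3 (by nlinarith)
          _ = (p * (p-1) * 2) * (δ ^ 2 * M ^ (p-2)) := by ring
          _ ≤ C * (δ ^ 2 * M ^ (p - 2)) := mul_le_mul_of_nonneg_right hCge hqM
      linarith [hgoal]
    · -- |δ| > y/2, crude bound
      push_neg at hδ
      have hdpos : 0 < |δ| := lt_trans (by linarith) hδ
      have hy2d : y ≤ 2 * |δ| := by linarith
      have hx3d : x ≤ 3 * |δ| := by rw [hxd]; linarith
      have hxp : x ^ p ≤ 3 ^ p * |δ| ^ p := by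
        calc x ^ p ≤ (3 * |δ|) ^ p := Real.rpow_le_rpow hx hx3d (by linarith)
        _ = 3 ^ p * |δ| ^ p := Real.mul_rpow (by norm_num) (abs_nonneg δ)
      have hyp1 : y ^ (p-1) ≤ 2 ^ (p-1) * |δ| ^ (p-1) := by
        calc y ^ (p-1) ≤ (2 * |δ|) ^ (p-1) := Real.rpow_le_rpow hy.le hy2d (by linarith)
        _ = 2 ^ (p-1) * |δ| ^ (p-1) := Real.mul_rpow (by norm_num) (abs_nonneg δ)
      have hsplit : |δ| ^ p = δ ^ 2 * |δ| ^ (p - 2) := by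
        rw [show p = 2 + (p - 2) by ring, Real.rpow_add hdpos]
        rw [show ((2:ℝ)) = ((2:ℕ):ℝ) by norm_num, Real.rpow_natCast, sq_abs]
        ring_nf
      have hd1 : |δ| ^ (p-1) * |δ| = |δ| ^ p := by
        rw [← Real.rpow_add_one (ne_of_gt hdpos)]; ring_nf
      have hdM : |δ| ^ (p - 2) ≤ 2 * M ^ (p - 2) := by
        have hM2d : M ≤ 2 * |δ| := by
          rw [hMdef]; exact max_le hy2d (by linarith)
        have hge : (2 * |δ|) ^ (p - 2) ≤ M ^ (p-2) :=
          Real.rpow_le_rpow_of_nonpos hM hM2d (by linarith)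
        have hmr : (2 * |δ|) ^ (p-2) = 2 ^ (p-2) * |δ| ^ (p-2) :=
          Real.mul_rpow (by norm_num) (abs_nonneg δ)
        have h2i : (1:ℝ) ≤ 2 * 2 ^ (p - 2) := by
          have he : (2:ℝ) * 2 ^ (p-2) = 2 ^ (p - 1) := by
            rw [show (2:ℝ) * 2 ^ (p-2) = 2 ^ (1:ℝ) * 2 ^ (p-2) by rw [Real.rpow_one],
              ← Real.rpow_add (by norm_num)]
            ring_nf
          rw [he, show (1:ℝ) = 2 ^ (0:ℝ) by simp]
          exact Real.rpow_le_rpow_of_exponent_le one_le_two (by linarith)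
        nlinarith [Real.rpow_nonneg (abs_nonneg δ) (p-2),
          Real.rpow_nonneg (show (0:ℝ) ≤ 2 by norm_num) (p-2)]
      have hyppos : 0 ≤ y ^ p := Real.rpow_nonneg hy.le p
      have hcrude : x ^ p - y ^ p - p * y ^ (p-1) * δ ≤ (3 ^ p + p * 2 ^ (p-1)) * |δ| ^ p := by
        have h0 : 0 ≤ p * y ^ (p-1) := by positivity
        have h8 : p * y ^ (p-1) * |δ| ≤ p * 2 ^ (p-1) * |δ| ^ p := by
          calc p * y ^ (p-1) * |δ| ≤ p * (2 ^ (p-1) * |δ| ^ (p-1)) * |δ| := by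
                apply mul_le_mul_of_nonneg_right _ (abs_nonneg δ)
                exact mul_le_mul_of_nonneg_left hyp1 (by linarith)
          _ = p * 2 ^ (p-1) * (|δ| ^ (p-1) * |δ|) := by ring
          _ = p * 2 ^ (p-1) * |δ| ^ p := by rw [hd1]
        nlinarith [mul_le_mul_of_nonneg_left habs1 h0]
      have hC2 : (3 ^ p + p * 2 ^ (p-1)) * |δ| ^ p ≤ C * (δ ^ 2 * M ^ (p - 2)) := by
        rw [hsplit]
        have hpos1 : (0:ℝ) ≤ 3 ^ p + p * 2 ^ (p-1) := by positivity
        calc (3 ^ p + p * 2 ^ (p-1)) * (δ ^ 2 * |δ| ^ (p-2))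
            ≤ (3 ^ p + p * 2 ^ (p-1)) * (δ ^ 2 * (2 * M ^ (p-2))) := by
              apply mul_le_mul_of_nonneg_left _ hpos1
              exact mul_le_mul_of_nonneg_left hdM (sq_nonneg δ)
          _ = (2 * 3 ^ p + p * (2 * 2 ^ (p-1))) * (δ ^ 2 * M ^ (p-2)) := by ring
          _ ≤ C * (δ ^ 2 * M ^ (p-2)) := by
              apply mul_le_mul_of_nonneg_right _ hqM
              have h2e : (2:ℝ) * 2 ^ (p-1) = 2 ^ p := by
                rw [show (2:ℝ) * 2 ^ (p-1) = 2 ^ (1:ℝ) * 2 ^ (p-1) by rw [Real.rpow_one],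
                  ← Real.rpow_add (by norm_num)]
                ring_nf
              rw [h2e, hC]
              nlinarith [Real.rpow_nonneg (show (0:ℝ) ≤ 2 by norm_num) p]
      linarith [hcrude.trans hC2]
  · -- p > 2
    push_neg at hp2
    rcases eq_or_lt_of_le hx with hx0 | hxpos
    · -- x = 0, δ = -y
      have hδy : δ = -y := by rw [hδd, ← hx0]; ring
      rw [← hx0, Real.zero_rpow (by linarith : p ≠ 0)]
      have hMy2 : M = y := by rw [hMdef, hδy, abs_neg, abs_of_pos hy, max_self]
      rw [hMy2, hδy]
      have hyy : y ^ (p-1) * y = y ^ p := by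
        rw [← Real.rpow_add_one (ne_of_gt hy)]; ring_nf
      have hyy2 : (-y) ^ 2 * y ^ (p-2) = y ^ p := by
        rw [neg_pow, show ((-1:ℝ))^2 = 1 by norm_num, one_mul,
          show (y:ℝ) ^ 2 = y ^ ((2:ℕ):ℝ) by rw [Real.rpow_natCast],
          ← Real.rpow_add hy]
        norm_num
      rw [hyy2]
      have hthis : 0 - y ^ p - p * y ^ (p-1) * (-y) = (p - 1) * y ^ p := by
        rw [show p * y ^ (p-1) * (-y) = -(p * (y ^ (p-1) * y)) by ring, hyy]; ring
      rw [hthis]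
      have hCp : p - 1 ≤ C := by rw [hC]; nlinarith
      exact mul_le_mul_of_nonneg_right hCp (Real.rpow_nonneg hy.le p)
    · -- x > 0
      have hq1 : (1:ℝ) ≤ p - 1 := by linarith
      have hb := bern_lower hp hxpos hy.le
      have h1' : x ^ p - y ^ p - p * y ^ (p - 1) * δ ≤
          p * δ * (x ^ (p-1) - y ^ (p-1)) := by
        have hyx : y - x = -δ := by rw [hxd]; ring
        rw [hyx] at hb
        nlinarith [hb]
      have hxM : x ≤ 2 * M := by rw [hxd]; linarith
      have h2M : (2 * M) ^ (p-2) = 2 ^ (p-2) * M ^ (p-2) := Real.mul_rpow (by norm_num) hM.le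
      have h2p2 : (2:ℝ) ^ (p-2) ≤ 2 ^ p :=
        Real.rpow_le_rpow_of_exponent_le one_le_two (by linarith)
      have hee : p - 1 - 1 = p - 2 := by ring
      have hkey2 : p * δ * (x ^ (p-1) - y ^ (p-1)) ≤
          p * (p-1) * (2*M) ^ (p - 2) * δ ^ 2 := by
        rcases le_or_gt 0 δ with hd | hd
        · have hb2 := bern_lower hq1 hxpos hy.le
          rw [hee, show y - x = -δ by rw [hxd]; ring] at hb2
          have hd2 : x ^ (p-1) - y ^ (p-1) ≤ (p-1) * x ^ (p-2) * δ := by nlinarith [hb2]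
          have hxm : x ^ (p-2) ≤ (2*M) ^ (p-2) :=
            Real.rpow_le_rpow hxpos.le hxM (by linarith)
          calc p * δ * (x ^ (p-1) - y ^ (p-1)) ≤ p * δ * ((p-1) * x ^ (p-2) * δ) := by
                apply mul_le_mul_of_nonneg_left hd2 (by positivity)
          _ = (p * (p-1) * δ ^ 2) * x ^ (p-2) := by ring
          _ ≤ (p * (p-1) * δ ^ 2) * (2*M) ^ (p-2) := by
                apply mul_le_mul_of_nonneg_left hxm (by positivity)
          _ = p * (p-1) * (2*M) ^ (p - 2) * δ ^ 2 := by ring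
        · have hb2 := bern_lower hq1 hy hxpos.le
          rw [hee, show x - y = δ by rw [hxd]; ring] at hb2
          have hd2 : y ^ (p-1) - x ^ (p-1) ≤ (p-1) * y ^ (p-2) * (-δ) := by nlinarith [hb2]
          have hym : y ^ (p-2) ≤ (2*M) ^ (p-2) :=
            Real.rpow_le_rpow hy.le (by linarith) (by linarith)
          calc p * δ * (x ^ (p-1) - y ^ (p-1)) = (p * (-δ)) * (y ^ (p-1) - x ^ (p-1)) := by ring
          _ ≤ (p * (-δ)) * ((p-1) * y ^ (p-2) * (-δ)) := by
                apply mul_le_mul_of_nonneg_left hd2 (by nlinarith)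
          _ = (p * (p-1) * δ ^ 2) * y ^ (p-2) := by ring
          _ ≤ (p * (p-1) * δ ^ 2) * (2*M) ^ (p-2) := by
                apply mul_le_mul_of_nonneg_left hym (by positivity)
          _ = p * (p-1) * (2*M) ^ (p - 2) * δ ^ 2 := by ring
      have hgoal : x ^ p - y ^ p - p * y ^ (p - 1) * δ ≤ C * (δ ^ 2 * M ^ (p - 2)) := by
        calc x ^ p - y ^ p - p * y ^ (p - 1) * δ
            ≤ p * (p-1) * (2*M) ^ (p - 2) * δ ^ 2 := h1'.trans hkey2
          _ = (p * (p-1) * 2 ^ (p-2)) * (δ ^ 2 * M ^ (p-2)) := by rw [h2M]; ring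
          _ ≤ C * (δ ^ 2 * M ^ (p - 2)) := by
              apply mul_le_mul_of_nonneg_right _ hqM
              rw [hC]
              nlinarith [Real.rpow_nonneg (show (0:ℝ) ≤ 3 by norm_num) p,
                mul_le_mul_of_nonneg_left h2p2 (show (0:ℝ) ≤ p * (p-1) by nlinarith)]
      linarith [hgoal]

lemma sq_rpow' (t : ℝ) (ht : 0 ≤ t) (q : ℝ) : (t ^ 2) ^ q = t ^ (2 * q) := by
  rw [← Real.rpow_natCast t 2, ← Real.rpow_mul ht]
  norm_num

set_option maxHeartbeats 2000000 in
theorem stmt_0 {E : Type*} [NormedAddCommGroup E] [InnerProductSpace ℝ E]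
    (r : ℝ) (hr : 2 ≤ r) :
    ∃ c : ℝ, 0 < c ∧ ∀ u v : E,
      ‖u + v‖ ^ r - ‖u‖ ^ r ≤
        r * (inner ℝ u v : ℝ) * ‖u‖ ^ (r - 2)
          + c * (‖v‖ ^ r + ‖v‖ ^ 2 * ‖u‖ ^ (r - 2)) := by
  have hp : (1:ℝ) ≤ r / 2 := by linarith
  obtain ⟨K, hKdef⟩ : ∃ K, K = (2:ℝ) ^ (r/2) * ((r/2) * (r/2) + (r/2) + 1) + 3 * 3 ^ (r/2) :=
    ⟨_, rfl⟩
  have hKpos : 0 < K := by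
    rw [hKdef]
    have h1 : (0:ℝ) < 2 ^ (r/2) := Real.rpow_pos_of_pos (by norm_num) _
    have h2 : (0:ℝ) < 3 ^ (r/2) := Real.rpow_pos_of_pos (by norm_num) _
    nlinarith
  refine ⟨9 * 3 ^ (r/2) * K + r + 2 ^ r, by positivity, ?_⟩
  intro u v
  have hab : |(inner ℝ u v : ℝ)| ≤ ‖u‖ * ‖v‖ := abs_real_inner_le_norm u v
  have ha0 : (0:ℝ) ≤ ‖u‖ := norm_nonneg u
  have hb0 : (0:ℝ) ≤ ‖v‖ := norm_nonneg v
  have h3p : (0:ℝ) < 3 ^ (r/2) := Real.rpow_pos_of_pos (by norm_num) _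
  have hbrn : (0:ℝ) ≤ ‖v‖ ^ r := Real.rpow_nonneg hb0 r
  have harn2 : (0:ℝ) ≤ ‖u‖ ^ (r-2) := Real.rpow_nonneg ha0 _
  have hba2 : (0:ℝ) ≤ ‖v‖ ^ 2 * ‖u‖ ^ (r-2) := by positivity
  by_cases hba : ‖v‖ ≤ ‖u‖
  · -- ‖v‖ ≤ ‖u‖
    rcases eq_or_lt_of_le ha0 with ha | ha
    · -- u = 0, hence v = 0
      have hu : u = 0 := norm_eq_zero.mp ha.symm
      have hv : v = 0 := norm_eq_zero.mp (le_antisymm (by rw [← ha] at hba; exact hba) hb0)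
      subst hu; subst hv
      simp only [add_zero, inner_zero_right, norm_zero]
      rw [Real.zero_rpow (by linarith : r ≠ 0)]
      norm_num
    · -- ‖u‖ > 0: main case, use key lemma
      have hy : (0:ℝ) < ‖u‖ ^ 2 := by positivity
      have hx : (0:ℝ) ≤ ‖u + v‖ ^ 2 := by positivity
      have hkey := key hp hy hx
      -- identify the pieces
      have hxy : ‖u + v‖ ^ 2 - ‖u‖ ^ 2 = 2 * (inner ℝ u v : ℝ) + ‖v‖ ^ 2 := by
        have := norm_add_sq_real u v; linarith
      have hxr : (‖u + v‖ ^ 2) ^ (r/2) = ‖u + v‖ ^ r := by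
        rw [sq_rpow' _ (norm_nonneg _), show 2 * (r/2) = r by ring]
      have hyr : (‖u‖ ^ 2) ^ (r/2) = ‖u‖ ^ r := by
        rw [sq_rpow' _ ha0, show 2 * (r/2) = r by ring]
      have hyp1 : (‖u‖ ^ 2) ^ (r/2 - 1) = ‖u‖ ^ (r - 2) := by
        rw [sq_rpow' _ ha0, show 2 * (r/2 - 1) = r - 2 by ring]
      have hyp2 : (‖u‖ ^ 2) ^ (r/2 - 2) * (‖u‖ ^ 2) = ‖u‖ ^ (r - 2) := by
        rw [sq_rpow' _ ha0, show (‖u‖:ℝ) ^ 2 = ‖u‖ ^ ((2:ℕ):ℝ) from (Real.rpow_natCast _ 2).symm,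
          ← Real.rpow_add ha, show 2 * (r/2 - 2) + (2:ℕ) = r - 2 by push_cast; ring]
      rw [hxr, hyr, hyp1, hxy] at hkey
      -- bound the error term
      have hδb : |2 * (inner ℝ u v : ℝ) + ‖v‖ ^ 2| ≤ 3 * (‖u‖ * ‖v‖) := by
        have h1 : |2 * (inner ℝ u v : ℝ) + ‖v‖ ^ 2| ≤ 2 * |(inner ℝ u v : ℝ)| + ‖v‖ ^ 2 := by
          have := abs_add_le (2 * (inner ℝ u v : ℝ)) (‖v‖ ^ 2)
          rw [abs_mul, abs_of_nonneg (by positivity : (0:ℝ) ≤ ‖v‖^2)] at this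
          simpa using this
        nlinarith
      have hδsq : (2 * (inner ℝ u v : ℝ) + ‖v‖ ^ 2) ^ 2 ≤ 9 * (‖u‖ ^ 2 * ‖v‖ ^ 2) := by
        nlinarith [abs_nonneg (2 * (inner ℝ u v : ℝ) + ‖v‖ ^ 2), sq_abs (2 * (inner ℝ u v : ℝ) + ‖v‖ ^ 2)]
      have hmax : (max (‖u‖ ^ 2) |2 * (inner ℝ u v : ℝ) + ‖v‖ ^ 2|) ^ (r/2 - 2) ≤
          3 ^ (r/2) * (‖u‖ ^ 2) ^ (r/2 - 2) := by
        have h3y : max (‖u‖ ^ 2) |2 * (inner ℝ u v : ℝ) + ‖v‖ ^ 2| ≤ 3 * ‖u‖ ^ 2 := by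
          apply max_le (by nlinarith)
          nlinarith
        have hmaxpos : 0 < max (‖u‖ ^ 2) |2 * (inner ℝ u v : ℝ) + ‖v‖ ^ 2| :=
          lt_of_lt_of_le hy (le_max_left _ _)
        have h1y : (0:ℝ) ≤ (‖u‖ ^ 2) ^ (r/2 - 2) := Real.rpow_nonneg hy.le _
        rcases le_or_gt (r/2) 2 with h2 | h2
        · have hm : (max (‖u‖ ^ 2) |2 * (inner ℝ u v : ℝ) + ‖v‖ ^ 2|) ^ (r/2 - 2) ≤
              (‖u‖ ^ 2) ^ (r/2 - 2) :=
            Real.rpow_le_rpow_of_nonpos hy (le_max_left _ _) (by linarith)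
          have h31 : (1:ℝ) ≤ 3 ^ (r/2) := by
            rw [show (1:ℝ) = 3 ^ (0:ℝ) by simp]
            exact Real.rpow_le_rpow_of_exponent_le (by norm_num) (by linarith)
          nlinarith
        · have hm : (max (‖u‖ ^ 2) |2 * (inner ℝ u v : ℝ) + ‖v‖ ^ 2|) ^ (r/2 - 2) ≤
              (3 * ‖u‖ ^ 2) ^ (r/2 - 2) :=
            Real.rpow_le_rpow hmaxpos.le h3y (by linarith)
          have hmr : (3 * ‖u‖ ^ 2) ^ (r/2 - 2) = 3 ^ (r/2 - 2) * (‖u‖ ^ 2) ^ (r/2 - 2) :=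
            Real.mul_rpow (by norm_num) hy.le
          have h32 : (3:ℝ) ^ (r/2 - 2) ≤ 3 ^ (r/2) :=
            Real.rpow_le_rpow_of_exponent_le (by norm_num) (by linarith)
          nlinarith
      -- combine error bound
      have herr : (2 * (inner ℝ u v : ℝ) + ‖v‖ ^ 2) ^ 2 *
            (max (‖u‖ ^ 2) |2 * (inner ℝ u v : ℝ) + ‖v‖ ^ 2|) ^ (r/2 - 2) ≤
          9 * 3 ^ (r/2) * (‖v‖ ^ 2 * ‖u‖ ^ (r - 2)) := by
        have h1y : (0:ℝ) ≤ (‖u‖ ^ 2) ^ (r/2 - 2) := Real.rpow_nonneg hy.le _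
        have hmp : (0:ℝ) ≤ (max (‖u‖ ^ 2) |2 * (inner ℝ u v : ℝ) + ‖v‖ ^ 2|) ^ (r/2 - 2) :=
          Real.rpow_nonneg (le_trans hy.le (le_max_left _ _)) _
        calc (2 * (inner ℝ u v : ℝ) + ‖v‖ ^ 2) ^ 2 *
              (max (‖u‖ ^ 2) |2 * (inner ℝ u v : ℝ) + ‖v‖ ^ 2|) ^ (r/2 - 2)
            ≤ (9 * (‖u‖ ^ 2 * ‖v‖ ^ 2)) * (3 ^ (r/2) * (‖u‖ ^ 2) ^ (r/2 - 2)) := by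
              apply mul_le_mul hδsq hmax hmp (by positivity)
          _ = 9 * 3 ^ (r/2) * (‖v‖ ^ 2 * ((‖u‖ ^ 2) ^ (r/2 - 2) * ‖u‖ ^ 2)) := by ring
          _ = 9 * 3 ^ (r/2) * (‖v‖ ^ 2 * ‖u‖ ^ (r - 2)) := by rw [hyp2]
      -- finish
      have hKerr : K * ((2 * (inner ℝ u v : ℝ) + ‖v‖ ^ 2) ^ 2 *
            (max (‖u‖ ^ 2) |2 * (inner ℝ u v : ℝ) + ‖v‖ ^ 2|) ^ (r/2 - 2)) ≤
          K * (9 * 3 ^ (r/2) * (‖v‖ ^ 2 * ‖u‖ ^ (r - 2))) :=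
        mul_le_mul_of_nonneg_left herr hKpos.le
      rw [← hKdef] at hkey
      have hr0 : (0:ℝ) ≤ r := by linarith
      have h2r : (0:ℝ) ≤ 2 ^ r := Real.rpow_nonneg (by norm_num) r
      nlinarith [hkey, hKerr, mul_nonneg (mul_nonneg h3p.le hKpos.le) hbrn,
        mul_nonneg hr0 hbrn, mul_nonneg h2r hbrn,
        mul_nonneg hr0 hba2, mul_nonneg h2r hba2]
  · -- ‖v‖ > ‖u‖
    push_neg at hba
    have hbpos : 0 < ‖v‖ := lt_of_le_of_lt ha0 hba
    have hL : ‖u + v‖ ^ r ≤ 2 ^ r * ‖v‖ ^ r := by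
      calc ‖u + v‖ ^ r ≤ (2 * ‖v‖) ^ r := by
            apply Real.rpow_le_rpow (norm_nonneg _) _ (by linarith)
            calc ‖u + v‖ ≤ ‖u‖ + ‖v‖ := norm_add_le u v
            _ ≤ 2 * ‖v‖ := by linarith
      _ = 2 ^ r * ‖v‖ ^ r := Real.mul_rpow (by norm_num) hb0
    have har : (0:ℝ) ≤ ‖u‖ ^ r := Real.rpow_nonneg ha0 r
    have hinner : -(r * ‖v‖ ^ r) ≤ r * (inner ℝ u v : ℝ) * ‖u‖ ^ (r - 2) := by
      have h1 : ‖u‖ ^ (r-2) ≤ ‖v‖ ^ (r-2) :=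
        Real.rpow_le_rpow ha0 hba.le (by linarith)
      have h2 : ‖u‖ * ‖v‖ * ‖u‖ ^ (r-2) ≤ ‖v‖ * ‖v‖ * ‖v‖ ^ (r-2) := by
        apply mul_le_mul _ h1 harn2 (by positivity)
        nlinarith
      have h3 : ‖v‖ * ‖v‖ * ‖v‖ ^ (r-2) = ‖v‖ ^ r := by
        rw [show ‖v‖ * ‖v‖ = ‖v‖ ^ ((2:ℕ):ℝ) by rw [Real.rpow_natCast]; ring,
          ← Real.rpow_add hbpos]
        norm_num
      have h4 : -(‖u‖ * ‖v‖) ≤ (inner ℝ u v : ℝ) := by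
        have := neg_abs_le (inner ℝ u v : ℝ); linarith
      have h5 : -(‖u‖ * ‖v‖ * ‖u‖ ^ (r-2)) ≤ (inner ℝ u v : ℝ) * ‖u‖ ^ (r-2) :=
        by nlinarith [mul_le_mul_of_nonneg_right h4 harn2]
      have hr0 : (0:ℝ) ≤ r := by linarith
      nlinarith [mul_le_mul_of_nonneg_left (h2.trans_eq h3) hr0,
        mul_le_mul_of_nonneg_left h5 hr0]
    have hr0 : (0:ℝ) ≤ r := by linarith
    have h2r : (0:ℝ) ≤ 2 ^ r := Real.rpow_nonneg (by norm_num) r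
    nlinarith [hL, har, hinner, mul_nonneg (mul_nonneg h3p.le hKpos.le) hbrn,
      mul_nonneg hr0 hbrn, mul_nonneg h2r hbrn,
      mul_nonneg (mul_nonneg h3p.le hKpos.le) hba2,
      mul_nonneg hr0 hba2, mul_nonneg h2r hba2]
end

section
/- Let φ be a random vector in ℝ^q with E[‖φ‖²] < ∞ and Σ = E[φᵀφ] non-singular. Define ℏ(x) = E[min(|⟨x,φ⟩|², |⟨x,φ⟩|)]. Then there exists λ₂ > 0 such that ℏ(x) ≥ λ₂ · min(‖x‖², ‖x‖) for all x ∈ ℝ^q. -/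
open MeasureTheory

private lemma min_mul_min_le {r a : ℝ} (hr : 0 ≤ r) (ha : 0 ≤ a) :
    min (r ^ 2) r * min (a ^ 2) a ≤ min ((r * a) ^ 2) (r * a) := by
  have h2 : (0:ℝ) ≤ min (a ^ 2) a := le_min (sq_nonneg a) ha
  apply le_min
  · calc min (r ^ 2) r * min (a ^ 2) a ≤ r ^ 2 * a ^ 2 :=
        mul_le_mul (min_le_left _ _) (min_le_left _ _) h2 (sq_nonneg r)
      _ = (r * a) ^ 2 := by ring
  · exact mul_le_mul (min_le_right _ _) (min_le_right _ _) h2 hr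

theorem stmt_3 {Ω : Type*} [MeasurableSpace Ω] (μ : Measure Ω) [IsProbabilityMeasure μ]
    (q : ℕ) (φ : Ω → EuclideanSpace ℝ (Fin q))
    (hφ : MemLp φ 2 μ)
    (hSig : (Matrix.of fun i j : Fin q => ∫ ω, φ ω i * φ ω j ∂μ).det ≠ 0) :
    ∃ lam : ℝ, 0 < lam ∧ ∀ x : EuclideanSpace ℝ (Fin q),
      lam * min (‖x‖ ^ 2) ‖x‖ ≤
        ∫ ω, min (|(inner ℝ x (φ ω) : ℝ)| ^ 2) |(inner ℝ x (φ ω) : ℝ)| ∂μ := by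
  classical
  set g : EuclideanSpace ℝ (Fin q) → Ω → ℝ :=
    fun x ω => min (|(inner ℝ x (φ ω) : ℝ)| ^ 2) |(inner ℝ x (φ ω) : ℝ)| with hgdef
  set h : EuclideanSpace ℝ (Fin q) → ℝ := fun x => ∫ ω, g x ω ∂μ with hhdef
  have hφm : AEStronglyMeasurable φ μ := hφ.1
  have hφ1 : Integrable φ μ := memLp_one_iff_integrable.mp
    (hφ.mono_exponent (by norm_num))
  have hnormint : Integrable (fun ω => ‖φ ω‖) μ := hφ1.norm
  have hgcont : ∀ ω, Continuous fun x : EuclideanSpace ℝ (Fin q) => g x ω := by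
    intro ω
    have : Continuous fun x : EuclideanSpace ℝ (Fin q) => (inner ℝ x (φ ω) : ℝ) :=
      (continuous_id.inner continuous_const)
    exact ((this.abs.pow 2).min this.abs)
  have hgmeas : ∀ x, AEStronglyMeasurable (g x) μ := by
    intro x
    have hc : Continuous fun v : EuclideanSpace ℝ (Fin q) =>
        min (|(inner ℝ x v : ℝ)| ^ 2) |(inner ℝ x v : ℝ)| := by
      have : Continuous fun v : EuclideanSpace ℝ (Fin q) => (inner ℝ x v : ℝ) :=
        (continuous_const.inner continuous_id)
      exact ((this.abs.pow 2).min this.abs)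
    exact hc.comp_aestronglyMeasurable hφm
  have hgnn : ∀ x ω, 0 ≤ g x ω := fun x ω => le_min (sq_nonneg _) (abs_nonneg _)
  have hgle : ∀ x ω, g x ω ≤ ‖x‖ * ‖φ ω‖ := by
    intro x ω
    exact (min_le_right _ _).trans (abs_real_inner_le_norm x (φ ω))
  have hgint : ∀ x, Integrable (g x) μ := by
    intro x
    refine (hnormint.const_mul ‖x‖).mono' (hgmeas x) ?_
    filter_upwards with ω
    rw [Real.norm_eq_abs, abs_of_nonneg (hgnn x ω)]
    exact hgle x ω
  have hhnn : ∀ x, 0 ≤ h x := fun x => integral_nonneg (hgnn x)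
  -- continuity of h
  have hhcont : Continuous h := by
    rw [continuous_iff_continuousAt]
    intro x₀
    refine continuousAt_of_dominated (bound := fun ω => (‖x₀‖ + 1) * ‖φ ω‖)
      (Filter.Eventually.of_forall hgmeas) ?_ (hnormint.const_mul _) ?_
    · have hball : Metric.ball x₀ 1 ∈ nhds x₀ := Metric.ball_mem_nhds x₀ one_pos
      filter_upwards [hball] with x hx
      filter_upwards with ω
      rw [Real.norm_eq_abs, abs_of_nonneg (hgnn x ω)]
      refine (hgle x ω).trans ?_
      have hn : ‖x‖ ≤ ‖x₀‖ + 1 := by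
        have h1 := norm_sub_norm_le x x₀
        have hd : ‖x - x₀‖ < 1 := by simpa [dist_eq_norm] using hx
        linarith
      exact mul_le_mul_of_nonneg_right hn (norm_nonneg _)
    · filter_upwards with ω
      exact (hgcont ω).continuousAt
  -- positivity of h on nonzero vectors
  have hpos : ∀ u : EuclideanSpace ℝ (Fin q), u ≠ 0 → 0 < h u := by
    intro u hu
    rcases lt_or_eq_of_le (hhnn u) with hlt | heq
    · exact hlt
    exfalso
    have hae : g u =ᵐ[μ] 0 :=
      (integral_eq_zero_iff_of_nonneg (hgnn u) (hgint u)).mp heq.symm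
    have hinner : ∀ᵐ ω ∂μ, (inner ℝ u (φ ω) : ℝ) = 0 := by
      filter_upwards [hae] with ω hω
      simp only [hgdef, Pi.zero_apply] at hω
      rcases min_eq_iff.mp hω with ⟨h1, _⟩ | ⟨h1, _⟩
      · exact abs_eq_zero.mp (pow_eq_zero_iff (n := 2) (by norm_num) |>.mp h1)
      · exact abs_eq_zero.mp h1
    apply hSig
    rw [← Matrix.exists_mulVec_eq_zero_iff]
    refine ⟨(fun i => u i), ?_, ?_⟩
    · intro hzero
      apply hu
      ext i
      exact congrFun hzero i
    · -- integrability of products of components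
      have hnsq : Integrable (fun ω => ‖φ ω‖ ^ 2) μ := hφ.norm.integrable_sq
      have hcm : ∀ i : Fin q, AEStronglyMeasurable (fun ω => φ ω i) μ := by
        intro i
        exact ((EuclideanSpace.proj i :
          EuclideanSpace ℝ (Fin q) →L[ℝ] ℝ).continuous).comp_aestronglyMeasurable hφm
      have habs : ∀ (i : Fin q) (v : EuclideanSpace ℝ (Fin q)), |v i| ≤ ‖v‖ := by
        intro i v
        have h1 : (inner ℝ (EuclideanSpace.single i (1:ℝ)) v : ℝ) = v i := by
          simp [EuclideanSpace.inner_single_left]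
        have h2 := abs_real_inner_le_norm (EuclideanSpace.single i (1:ℝ)) v
        rw [h1, EuclideanSpace.norm_single] at h2
        simpa using h2
      have hint : ∀ i j : Fin q, Integrable (fun ω => φ ω i * φ ω j) μ := by
        intro i j
        refine hnsq.mono' ((hcm i).mul (hcm j)) ?_
        filter_upwards with ω
        rw [Real.norm_eq_abs, abs_mul]
        calc |φ ω i| * |φ ω j| ≤ ‖φ ω‖ * ‖φ ω‖ :=
            mul_le_mul (habs i _) (habs j _) (abs_nonneg _) (norm_nonneg _)
          _ = ‖φ ω‖ ^ 2 := (sq ‖φ ω‖).symm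
      funext i
      have hsum : ∀ ω, ∑ j : Fin q, φ ω i * φ ω j * u j
          = φ ω i * (inner ℝ u (φ ω) : ℝ) := by
        intro ω
        simp only [PiLp.inner_apply, RCLike.inner_apply, conj_trivial, Finset.mul_sum]
        exact Finset.sum_congr rfl fun j _ => by ring
      calc (Matrix.of fun i j : Fin q => ∫ ω, φ ω i * φ ω j ∂μ).mulVec (fun i => u i) i
          = ∑ j : Fin q, (∫ ω, φ ω i * φ ω j ∂μ) * u j := by
            simp [Matrix.mulVec, dotProduct]
        _ = ∑ j : Fin q, ∫ ω, φ ω i * φ ω j * u j ∂μ := by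
            congr 1; funext j; rw [integral_mul_const]
        _ = ∫ ω, ∑ j : Fin q, φ ω i * φ ω j * u j ∂μ := by
            rw [integral_finset_sum]
            intro j _
            exact (hint i j).mul_const _
        _ = ∫ ω, φ ω i * (inner ℝ u (φ ω) : ℝ) ∂μ := by
            congr 1; funext ω; exact hsum ω
        _ = 0 := by
            rw [← integral_zero Ω ℝ (μ := μ)]
            apply integral_congr_ae
            filter_upwards [hinner] with ω hω
            rw [hω, mul_zero]
  -- split on whether the space is trivial
  by_cases hq : Nonempty (Fin q)
  · haveI : Nontrivial (EuclideanSpace ℝ (Fin q)) := by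
      refine ⟨0, EuclideanSpace.single hq.some 1, ?_⟩
      intro hc
      have : ‖EuclideanSpace.single hq.some (1:ℝ)‖ = 0 := by rw [← hc]; simp
      rw [EuclideanSpace.norm_single] at this
      norm_num at this
    have hne : (Metric.sphere (0 : EuclideanSpace ℝ (Fin q)) 1).Nonempty :=
      NormedSpace.sphere_nonempty.mpr zero_le_one
    obtain ⟨u, huS, humin⟩ :=
      (isCompact_sphere (0 : EuclideanSpace ℝ (Fin q)) 1).exists_isMinOn hne
        hhcont.continuousOn
    have hunorm : ‖u‖ = 1 := by simpa using huS
    have hune : u ≠ 0 := fun hc => by simp [hc] at hunorm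
    refine ⟨h u, hpos u hune, ?_⟩
    intro x
    show h u * min (‖x‖ ^ 2) ‖x‖ ≤ h x
    by_cases hx : x = 0
    · subst hx
      simpa using hhnn 0
    · have hr : 0 < ‖x‖ := norm_pos_iff.mpr hx
      set u' : EuclideanSpace ℝ (Fin q) := ‖x‖⁻¹ • x with hu'def
      have hu'S : u' ∈ Metric.sphere (0 : EuclideanSpace ℝ (Fin q)) 1 := by
        simp [hu'def, norm_smul, abs_of_pos (inv_pos.mpr hr), inv_mul_cancel₀ hr.ne']
      have hle : h u ≤ h u' := humin hu'S
      have hx' : x = ‖x‖ • u' := by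
        rw [hu'def, smul_smul, mul_inv_cancel₀ hr.ne', one_smul]
      have hkey : ∀ ω, min (‖x‖ ^ 2) ‖x‖ * g u' ω ≤ g x ω := by
        intro ω
        have hi : (inner ℝ x (φ ω) : ℝ) = ‖x‖ * (inner ℝ u' (φ ω) : ℝ) := by
          conv_lhs => rw [hx']
          exact real_inner_smul_left u' (φ ω) ‖x‖
        have habs : |(inner ℝ x (φ ω) : ℝ)| = ‖x‖ * |(inner ℝ u' (φ ω) : ℝ)| := by
          rw [hi, abs_mul, abs_of_pos hr]
        simp only [hgdef, habs]
        exact min_mul_min_le hr.le (abs_nonneg _)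
      calc h u * min (‖x‖ ^ 2) ‖x‖ ≤ h u' * min (‖x‖ ^ 2) ‖x‖ := by
            apply mul_le_mul_of_nonneg_right hle
            exact le_min (sq_nonneg _) hr.le
        _ = ∫ ω, min (‖x‖ ^ 2) ‖x‖ * g u' ω ∂μ := by
            rw [integral_const_mul]; ring
        _ ≤ ∫ ω, g x ω ∂μ := by
            apply integral_mono ((hgint u').const_mul _) (hgint x)
            intro ω
            exact hkey ω
        _ = h x := rfl
  · -- trivial case : q = 0
    haveI : IsEmpty (Fin q) := not_nonempty_iff.mp hq
    refine ⟨1, one_pos, ?_⟩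
    intro x
    have hx : x = 0 := Subsingleton.elim x 0
    subst hx
    show (1:ℝ) * min (‖(0 : EuclideanSpace ℝ (Fin q))‖ ^ 2) ‖(0 : EuclideanSpace ℝ (Fin q))‖ ≤ h 0
    simpa using hhnn 0
end

section
/- Let (ΔM_i)_{i≥1} be a martingale difference sequence with respect to a filtration (F_i), satisfying |ΔM_i| ≤ |Z_i| + E|Z| a.s. where (Z_i) are i.i.d. integrable copies of Z. Then E|∑_{i=1}^n ΔM_i|/n → 0 as n → ∞. -/
open scoped ENNReal NNReal


open MeasureTheory ProbabilityTheory Filter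

noncomputable def myTrunc (K x : ℝ) : ℝ := max (min x K) (-K)

lemma myTrunc_continuous (K : ℝ) : Continuous (myTrunc K) :=
  ((continuous_id.min continuous_const).max continuous_const)

lemma myTrunc_abs_le {K : ℝ} (hK : 0 ≤ K) (x : ℝ) : |myTrunc K x| ≤ K := by
  unfold myTrunc
  rw [abs_le]
  exact ⟨le_max_right _ _, max_le (min_le_right _ _) (by linarith)⟩

lemma myTrunc_abs_le_abs {K : ℝ} (hK : 0 ≤ K) (x : ℝ) : |myTrunc K x| ≤ |x| := by
  unfold myTrunc
  rcases le_total x K with h1 | h1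
  · rcases le_total (-K) x with h2 | h2
    · rw [min_eq_left h1, max_eq_left h2]
    · rw [min_eq_left h1, max_eq_right h2]
      rw [abs_of_nonpos (by linarith), abs_of_nonpos (by linarith)]
      linarith
  · rw [min_eq_right h1, max_eq_left (by linarith)]
    rw [abs_of_nonneg hK]
    exact h1.trans (le_abs_self x)

lemma myTrunc_sub_abs {K : ℝ} (hK : 0 ≤ K) (x : ℝ) :
    |x - myTrunc K x| = max (|x| - K) 0 := by
  unfold myTrunc
  rcases le_total x K with h1 | h1
  · rcases le_total (-K) x with h2 | h2
    · rw [min_eq_left h1, max_eq_left h2, sub_self, abs_zero]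
      rw [eq_comm, max_eq_right]
      have : |x| ≤ K := abs_le.2 ⟨h2, h1⟩
      linarith
    · rw [min_eq_left h1, max_eq_right h2]
      rw [abs_of_nonpos (by linarith), abs_of_nonpos (by linarith)]
      rw [max_eq_left (by linarith)]
      ring
  · rw [min_eq_right h1, max_eq_left (by linarith)]
    rw [abs_of_nonneg (by linarith), abs_of_nonneg (by linarith)]
    rw [max_eq_left (by linarith)]

lemma my_cs {Ω : Type*} {m : MeasurableSpace Ω} {μ : Measure Ω} [IsProbabilityMeasure μ]
    (f : Ω → ℝ) (hf : MemLp f 2 μ) :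
    ∫ ω, |f ω| ∂μ ≤ Real.sqrt (∫ ω, (f ω) ^ 2 ∂μ) := by
  have hpq : Real.HolderConjugate 2 2 := Real.HolderConjugate.two_two
  have h1 : MemLp (fun ω => |f ω|) (ENNReal.ofReal 2) μ := by
    have h2 : (ENNReal.ofReal 2) = (2 : ℝ≥0∞) := by
      rw [show ((2 : ℝ)) = (((2 : ℝ≥0) : ℝ)) by norm_num, ENNReal.ofReal_coe_nnreal]
      norm_num
    rw [h2]
    simpa [Real.norm_eq_abs] using hf.norm
  have h2 : MemLp (fun _ : Ω => (1 : ℝ)) (ENNReal.ofReal 2) μ := memLp_const 1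
  have h := integral_mul_le_Lp_mul_Lq_of_nonneg hpq
    (Eventually.of_forall fun ω => abs_nonneg (f ω))
    (Eventually.of_forall fun _ => zero_le_one) h1 h2
  simp only [mul_one, Real.one_rpow, one_pow] at h
  have hl : ∫ ω, |f ω| ^ (2 : ℝ) ∂μ = ∫ ω, (f ω) ^ 2 ∂μ := by
    refine integral_congr_ae (Eventually.of_forall fun ω => ?_)
    show |f ω| ^ (2 : ℝ) = f ω ^ 2
    rw [show (2 : ℝ) = ((2 : ℕ) : ℝ) by norm_num, Real.rpow_natCast, sq_abs]
  have hone : (∫ _a : Ω, (1 : ℝ) ∂μ) = 1 := by simp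
  rw [hl, hone, Real.one_rpow, mul_one] at h
  calc ∫ ω, |f ω| ∂μ ≤ (∫ ω, (f ω) ^ 2 ∂μ) ^ ((1 : ℝ) / 2) := h
    _ = Real.sqrt (∫ ω, (f ω) ^ 2 ∂μ) := (Real.sqrt_eq_rpow _).symm

theorem stmt_12 {Ω : Type*} {m : MeasurableSpace Ω} (μ : Measure Ω) [IsProbabilityMeasure μ]
    (ℱ : Filtration ℕ m)
    (ΔM : ℕ → Ω → ℝ) (Z : ℕ → Ω → ℝ)
    (hadp : Adapted ℱ ΔM)
    (hint : ∀ i, Integrable (ΔM i) μ)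
    (hmds : ∀ i, μ[ΔM (i + 1) | ℱ i] =ᵐ[μ] 0)
    (hZiid : iIndepFun Z μ)
    (hZid : ∀ i, IdentDistrib (Z i) (Z 0) μ μ)
    (hZint : Integrable (Z 0) μ)
    (hdom : ∀ i, ∀ᵐ ω ∂μ, |ΔM (i + 1) ω| ≤ |Z (i + 1) ω| + ∫ ω', |Z 0 ω'| ∂μ) :
    Tendsto (fun n : ℕ =>
        (∫ ω, |∑ i ∈ Finset.range n, ΔM (i + 1) ω| ∂μ) / n) atTop (nhds 0) := by
  classical
  set c : ℝ := ∫ ω', |Z 0 ω'| ∂μ with hc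
  have hc0 : 0 ≤ c := integral_nonneg fun _ => abs_nonneg _
  set e : ℝ → ℝ := fun K => ∫ ω, max (|Z 0 ω| + c - K) 0 ∂μ with he
  have hZabs : Integrable (fun ω => |Z 0 ω| + c) μ := by
    exact hZint.abs.add (integrable_const c)
  have hgmeas : ∀ K : ℝ, Measurable fun x : ℝ => max (|x| + c - K) 0 := fun K =>
    (((continuous_abs.add continuous_const).sub continuous_const).max
      continuous_const).measurable
  have he_meas : ∀ K : ℝ, AEStronglyMeasurable (fun ω => max (|Z 0 ω| + c - K) 0) μ :=
    fun K => ((hgmeas K).comp_aemeasurable hZint.aemeasurable).aestronglyMeasurable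
  have he_int : ∀ K : ℝ, 0 ≤ K → Integrable (fun ω => max (|Z 0 ω| + c - K) 0) μ := by
    intro K hK
    refine hZabs.mono' (he_meas K) (Eventually.of_forall fun ω => ?_)
    rw [Real.norm_eq_abs, abs_of_nonneg (le_max_right _ _)]
    have h0 : 0 ≤ |Z 0 ω| + c := add_nonneg (abs_nonneg _) hc0
    exact max_le (by linarith) h0
  have he_nonneg : ∀ K : ℝ, 0 ≤ e K :=
    fun K => integral_nonneg fun ω => le_max_right _ _
  have he_tendsto : Tendsto (fun k : ℕ => e k) atTop (nhds 0) := by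
    have h := tendsto_integral_of_dominated_convergence (F := fun (k : ℕ) ω => max (|Z 0 ω| + c - k) 0)
      (f := fun _ => (0 : ℝ)) (bound := fun ω => |Z 0 ω| + c)
      (fun k => he_meas k) hZabs
      (fun k => Eventually.of_forall fun ω => by
        rw [Real.norm_eq_abs, abs_of_nonneg (le_max_right _ _)]
        have h0 : 0 ≤ |Z 0 ω| + c := add_nonneg (abs_nonneg _) hc0
        refine max_le ?_ h0
        show |Z 0 ω| + c - (k : ℝ) ≤ |Z 0 ω| + c
        have hk : (0 : ℝ) ≤ (k : ℝ) := Nat.cast_nonneg k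
        linarith)
      (Eventually.of_forall fun ω => by
        have hev : ∀ᶠ k : ℕ in atTop, max (|Z 0 ω| + c - k) 0 = 0 := by
          filter_upwards [eventually_ge_atTop ⌈|Z 0 ω| + c⌉₊] with k hk
          have : |Z 0 ω| + c ≤ (k : ℝ) := (Nat.le_ceil _).trans (by exact_mod_cast hk)
          exact max_eq_right (by linarith)
        exact tendsto_const_nhds.congr'
          (by filter_upwards [hev] with k hk; exact hk.symm))
    simpa using h
  -- the key bound
  have key : ∀ K : ℝ, 0 ≤ K → ∀ n : ℕ,
      (∫ ω, |∑ i ∈ Finset.range n, ΔM (i + 1) ω| ∂μ)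
        ≤ 2 * K * Real.sqrt n + n * (2 * e K) := by
    intro K hK n
    set U : ℕ → Ω → ℝ := fun i ω => myTrunc K (ΔM (i + 1) ω) with hUdef
    set V : ℕ → Ω → ℝ := fun i ω => ΔM (i + 1) ω - U i ω with hVdef
    set U' : ℕ → Ω → ℝ := fun i => U i - μ[U i | ℱ i] with hU'def
    set V' : ℕ → Ω → ℝ := fun i => V i - μ[V i | ℱ i] with hV'def
    have hUmeas : ∀ i, StronglyMeasurable[ℱ (i + 1)] (U i) :=
      fun i => (myTrunc_continuous K).comp_stronglyMeasurable (hadp (i + 1)).stronglyMeasurable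
    have hUint : ∀ i, Integrable (U i) μ := fun i =>
      (hint (i + 1)).abs.mono' ((hUmeas i).mono (ℱ.le _)).aestronglyMeasurable
        (Eventually.of_forall fun ω => by
          rw [Real.norm_eq_abs]
          exact myTrunc_abs_le_abs hK _)
    have hVint : ∀ i, Integrable (V i) μ := fun i => (hint (i + 1)).sub (hUint i)
    have hU'int : ∀ i, Integrable (U' i) μ := fun i => (hUint i).sub integrable_condExp
    have hV'int : ∀ i, Integrable (V' i) μ := fun i => (hVint i).sub integrable_condExp
    have hUcond_bdd : ∀ i, ∀ᵐ ω ∂μ, |(μ[U i | ℱ i]) ω| ≤ K := by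
      intro i
      have h := ae_bdd_condExp_of_ae_bdd (μ := μ) (m := (ℱ i : MeasurableSpace Ω))
        (R := K.toNNReal) (f := U i)
        (Eventually.of_forall fun ω => by
          rw [Real.coe_toNNReal K hK]; exact myTrunc_abs_le hK _)
      filter_upwards [h] with ω hω
      rwa [Real.coe_toNNReal K hK] at hω
    have hU'bdd : ∀ i, ∀ᵐ ω ∂μ, |U' i ω| ≤ 2 * K := by
      intro i
      filter_upwards [hUcond_bdd i] with ω hω
      calc |U' i ω| = |U i ω - (μ[U i | ℱ i]) ω| := rfl
        _ ≤ |U i ω| + |(μ[U i | ℱ i]) ω| := abs_sub _ _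
        _ ≤ K + K := add_le_add (myTrunc_abs_le hK _) hω
        _ = 2 * K := by ring
    have hU'meas : ∀ i j, i < j → StronglyMeasurable[ℱ j] (U' i) := fun i j hij =>
      ((hUmeas i).mono (ℱ.mono hij)).sub
        (stronglyMeasurable_condExp.mono (ℱ.mono hij.le))
    have hU'zero : ∀ i, μ[U' i | ℱ i] =ᵐ[μ] 0 := by
      intro i
      have h1 := condExp_sub (μ := μ) (m := ℱ i) (hUint i)
        (integrable_condExp (f := U i) (m := ℱ i))
      have h2 := condExp_condExp_of_le (le_refl (ℱ i)) (ℱ.le i) (f := U i) (μ := μ)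
      filter_upwards [h1, h2] with ω e1 e2
      simp only [hU'def, Pi.sub_apply, Pi.zero_apply] at e1 e2 ⊢
      rw [e1, e2]
      ring
    have hprod_int : ∀ i j, Integrable (fun ω => U' i ω * U' j ω) μ := by
      intro i j
      refine (integrable_const ((2 * K) * (2 * K))).mono'
        ((hU'int i).aestronglyMeasurable.mul (hU'int j).aestronglyMeasurable) ?_
      filter_upwards [hU'bdd i, hU'bdd j] with ω h1 h2
      rw [Real.norm_eq_abs, abs_mul]
      exact mul_le_mul h1 h2 (abs_nonneg _) (by linarith)
    have horth : ∀ i j, i < j → ∫ ω, U' i ω * U' j ω ∂μ = 0 := by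
      intro i j hij
      have hm : ℱ j ≤ m := ℱ.le j
      have hpull := condExp_mul_of_stronglyMeasurable_left (μ := μ) (m := ℱ j)
        (hU'meas i j hij) (hprod_int i j) (hU'int j)
      have h0 : μ[U' i * U' j | ℱ j] =ᵐ[μ] 0 := by
        refine hpull.trans ?_
        filter_upwards [hU'zero j] with ω hω
        simp only [Pi.mul_apply, Pi.zero_apply] at hω ⊢
        rw [hω, mul_zero]
      have hic := integral_condExp (μ := μ) (f := U' i * U' j) hm
      rw [show ∫ ω, U' i ω * U' j ω ∂μ = ∫ ω, (U' i * U' j) ω ∂μ from rfl, ← hic]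
      rw [integral_congr_ae h0]
      simp
    have horth' : ∀ i j, i ≠ j → ∫ ω, U' i ω * U' j ω ∂μ = 0 := by
      intro i j hne
      rcases hne.lt_or_gt with h | h
      · exact horth i j h
      · rw [show (fun ω => U' i ω * U' j ω) = fun ω => U' j ω * U' i ω from
          funext fun ω => mul_comm _ _]
        exact horth j i h
    have hSU2 : ∫ ω, (∑ i ∈ Finset.range n, U' i ω) ^ 2 ∂μ ≤ n * (2 * K) ^ 2 := by
      have hexp : ∀ ω, (∑ i ∈ Finset.range n, U' i ω) ^ 2
          = ∑ i ∈ Finset.range n, ∑ j ∈ Finset.range n, U' i ω * U' j ω := by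
        intro ω; rw [sq, Finset.sum_mul_sum]
      calc ∫ ω, (∑ i ∈ Finset.range n, U' i ω) ^ 2 ∂μ
          = ∑ i ∈ Finset.range n, ∑ j ∈ Finset.range n, ∫ ω, U' i ω * U' j ω ∂μ := by
            simp_rw [hexp]
            rw [integral_finset_sum _ fun i _ =>
              integrable_finset_sum _ fun j _ => hprod_int i j]
            exact Finset.sum_congr rfl fun i _ =>
              integral_finset_sum _ fun j _ => hprod_int i j
        _ = ∑ i ∈ Finset.range n, ∫ ω, U' i ω * U' i ω ∂μ := by
            refine Finset.sum_congr rfl fun i hi => ?_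
            rw [Finset.sum_eq_single i (fun j _ hne => horth' i j (Ne.symm hne))
              (fun hi' => absurd hi hi')]
        _ ≤ ∑ _i ∈ Finset.range n, (2 * K) ^ 2 := by
            refine Finset.sum_le_sum fun i _ => ?_
            have hb : ∀ᵐ ω ∂μ, U' i ω * U' i ω ≤ (2 * K) ^ 2 := by
              filter_upwards [hU'bdd i] with ω h
              calc U' i ω * U' i ω ≤ |U' i ω| * |U' i ω| := by
                    rw [← abs_mul]; exact le_abs_self _
                _ ≤ (2 * K) * (2 * K) := mul_le_mul h h (abs_nonneg _) (by linarith)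
                _ = (2 * K) ^ 2 := (sq _).symm
            calc ∫ ω, U' i ω * U' i ω ∂μ ≤ ∫ _ω, (2 * K) ^ 2 ∂μ :=
                  integral_mono_ae (hprod_int i i) (integrable_const _) hb
              _ = (2 * K) ^ 2 := by simp
        _ = n * (2 * K) ^ 2 := by
            rw [Finset.sum_const, Finset.card_range, nsmul_eq_mul]
    have hSU : ∫ ω, |∑ i ∈ Finset.range n, U' i ω| ∂μ ≤ 2 * K * Real.sqrt n := by
      have hall : ∀ᵐ ω ∂μ, ∀ i ∈ Finset.range n, |U' i ω| ≤ 2 * K :=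
        (ae_ball_iff (Finset.range n).countable_toSet).2 fun i _ => hU'bdd i
      have hmem : MemLp (fun ω => ∑ i ∈ Finset.range n, U' i ω) 2 μ := by
        refine MemLp.of_bound
          (integrable_finset_sum _ fun i _ => hU'int i).aestronglyMeasurable
          (n * (2 * K)) ?_
        filter_upwards [hall] with ω h
        rw [Real.norm_eq_abs]
        calc |∑ i ∈ Finset.range n, U' i ω| ≤ ∑ i ∈ Finset.range n, |U' i ω| :=
              Finset.abs_sum_le_sum_abs _ _
          _ ≤ ∑ _i ∈ Finset.range n, (2 * K) := Finset.sum_le_sum h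
          _ = n * (2 * K) := by rw [Finset.sum_const, Finset.card_range, nsmul_eq_mul]
      calc ∫ ω, |∑ i ∈ Finset.range n, U' i ω| ∂μ
          ≤ Real.sqrt (∫ ω, (∑ i ∈ Finset.range n, U' i ω) ^ 2 ∂μ) := my_cs _ hmem
        _ ≤ Real.sqrt (n * (2 * K) ^ 2) := Real.sqrt_le_sqrt hSU2
        _ = 2 * K * Real.sqrt n := by
            rw [Real.sqrt_mul (Nat.cast_nonneg n), Real.sqrt_sq (by linarith)]
            ring
    have hVbound : ∀ i, ∫ ω, |V i ω| ∂μ ≤ e K := by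
      intro i
      have h1 : ∀ ω, |V i ω| = max (|ΔM (i + 1) ω| - K) 0 := fun ω =>
        myTrunc_sub_abs hK _
      have hZi1int : Integrable (Z (i + 1)) μ := (hZid (i + 1)).integrable_iff.2 hZint
      have hdomint : Integrable (fun ω => |Z (i + 1) ω| + c) μ := by
        exact hZi1int.abs.add (integrable_const c)
      have hZi : Integrable (fun ω => max (|Z (i + 1) ω| + c - K) 0) μ := by
        refine hdomint.mono'
          (((hgmeas K).comp_aemeasurable hZi1int.aemeasurable).aestronglyMeasurable)
          (Eventually.of_forall fun ω => ?_)
        rw [Real.norm_eq_abs, abs_of_nonneg (le_max_right _ _)]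
        have h0 : 0 ≤ |Z (i + 1) ω| + c := add_nonneg (abs_nonneg _) hc0
        exact max_le (by linarith) h0
      have h2 : ∀ᵐ ω ∂μ, |V i ω| ≤ max (|Z (i + 1) ω| + c - K) 0 := by
        filter_upwards [hdom i] with ω hω
        rw [h1]
        exact max_le_max (by linarith) le_rfl
      have h3 : ∫ ω, |V i ω| ∂μ ≤ ∫ ω, max (|Z (i + 1) ω| + c - K) 0 ∂μ :=
        integral_mono_ae (hVint i).abs hZi h2
      have h4 : ∫ ω, max (|Z (i + 1) ω| + c - K) 0 ∂μ = e K := by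
        have hg : Measurable fun x : ℝ => max (|x| + c - K) 0 :=
          (((continuous_abs.add continuous_const).sub continuous_const).max
            continuous_const).measurable
        exact ((hZid (i + 1)).comp hg).integral_eq
      linarith
    have hV'bound : ∀ i, ∫ ω, |V' i ω| ∂μ ≤ 2 * e K := by
      intro i
      have h1 : ∫ ω, |V' i ω| ∂μ
          ≤ ∫ ω, (|V i ω| + |(μ[V i | ℱ i]) ω|) ∂μ := by
        refine integral_mono (hV'int i).abs
          ((hVint i).abs.add integrable_condExp.abs) fun ω => ?_
        exact abs_sub _ _
      rw [integral_add (hVint i).abs integrable_condExp.abs] at h1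
      have h2 := integral_abs_condExp_le (μ := μ) (m := ℱ i) (V i)
      have h3 := hVbound i
      linarith
    have hdecomp : ∀ᵐ ω ∂μ, ∑ i ∈ Finset.range n, ΔM (i + 1) ω
        = ∑ i ∈ Finset.range n, U' i ω + ∑ i ∈ Finset.range n, V' i ω := by
      have hzero : ∀ i, μ[U i | ℱ i] + μ[V i | ℱ i] =ᵐ[μ] 0 := by
        intro i
        have heq : ΔM (i + 1) = U i + V i := by
          funext ω; simp [hVdef]
        have h1 : μ[ΔM (i + 1) | ℱ i] =ᵐ[μ] μ[U i | ℱ i] + μ[V i | ℱ i] := by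
          rw [heq]
          exact condExp_add (hUint i) (hVint i) _
        exact h1.symm.trans (hmds i)
      have hae : ∀ᵐ ω ∂μ, ∀ i ∈ Finset.range n,
          (μ[U i | ℱ i]) ω + (μ[V i | ℱ i]) ω = 0 :=
        (ae_ball_iff (Finset.range n).countable_toSet).2 fun i _ => by
          filter_upwards [hzero i] with ω h
          simpa using h
      filter_upwards [hae] with ω h
      rw [← Finset.sum_add_distrib]
      refine Finset.sum_congr rfl fun i hi => ?_
      have h0 := h i hi
      simp only [hU'def, hV'def, hVdef, Pi.sub_apply]
      linarith
    have hVsum : ∫ ω, |∑ i ∈ Finset.range n, V' i ω| ∂μ ≤ n * (2 * e K) := by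
      calc ∫ ω, |∑ i ∈ Finset.range n, V' i ω| ∂μ
          ≤ ∫ ω, ∑ i ∈ Finset.range n, |V' i ω| ∂μ :=
            integral_mono (integrable_finset_sum _ fun i _ => hV'int i).abs
              (integrable_finset_sum _ fun i _ => (hV'int i).abs)
              fun ω => Finset.abs_sum_le_sum_abs _ _
        _ = ∑ i ∈ Finset.range n, ∫ ω, |V' i ω| ∂μ :=
            integral_finset_sum _ fun i _ => (hV'int i).abs
        _ ≤ ∑ _i ∈ Finset.range n, (2 * e K) := Finset.sum_le_sum fun i _ => hV'bound i
        _ = n * (2 * e K) := by rw [Finset.sum_const, Finset.card_range, nsmul_eq_mul]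
    calc ∫ ω, |∑ i ∈ Finset.range n, ΔM (i + 1) ω| ∂μ
        = ∫ ω, |∑ i ∈ Finset.range n, U' i ω + ∑ i ∈ Finset.range n, V' i ω| ∂μ :=
          integral_congr_ae (hdecomp.mono fun ω h => by simp only [h])
      _ ≤ ∫ ω, (|∑ i ∈ Finset.range n, U' i ω| + |∑ i ∈ Finset.range n, V' i ω|) ∂μ :=
          integral_mono
            ((integrable_finset_sum _ fun i _ => hU'int i).add
              (integrable_finset_sum _ fun i _ => hV'int i)).abs
            ((integrable_finset_sum _ fun i _ => hU'int i).abs.add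
              (integrable_finset_sum _ fun i _ => hV'int i).abs)
            fun ω => abs_add_le _ _
      _ = (∫ ω, |∑ i ∈ Finset.range n, U' i ω| ∂μ)
            + ∫ ω, |∑ i ∈ Finset.range n, V' i ω| ∂μ :=
          integral_add (integrable_finset_sum _ fun i _ => hU'int i).abs
            (integrable_finset_sum _ fun i _ => (hV'int i)).abs
      _ ≤ 2 * K * Real.sqrt n + n * (2 * e K) := add_le_add hSU hVsum
  -- final limit argument
  rw [NormedAddCommGroup.tendsto_nhds_zero]
  intro ε hε
  obtain ⟨K, hKe⟩ : ∃ K : ℕ, e K < ε / 4 :=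
    (he_tendsto.eventually (gt_mem_nhds (by positivity : (0 : ℝ) < ε / 4))).exists
  have hsqrtTop : Tendsto (fun n : ℕ => Real.sqrt n) atTop atTop := by
    have h := (tendsto_rpow_atTop (by norm_num : (0 : ℝ) < 1 / 2)).comp
      (tendsto_natCast_atTop_atTop (R := ℝ))
    exact h.congr fun n => (Real.sqrt_eq_rpow _).symm
  have hsqrt : Tendsto (fun n : ℕ => 2 * (K : ℝ) / Real.sqrt n) atTop (nhds 0) :=
    Tendsto.div_atTop tendsto_const_nhds hsqrtTop
  have hev := hsqrt.eventually (gt_mem_nhds (by positivity : (0 : ℝ) < ε / 2))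
  filter_upwards [hev, eventually_ge_atTop 1] with n h2 hn1
  have hn0 : (0 : ℝ) < n := by exact_mod_cast hn1
  have hb := key K (Nat.cast_nonneg K) n
  have hnonneg : 0 ≤ ∫ ω, |∑ i ∈ Finset.range n, ΔM (i + 1) ω| ∂μ :=
    integral_nonneg fun ω => abs_nonneg _
  rw [Real.norm_eq_abs, abs_of_nonneg (div_nonneg hnonneg hn0.le)]
  have hsn : (0 : ℝ) < Real.sqrt n := Real.sqrt_pos.2 hn0
  have heq : (2 * (K : ℝ) * Real.sqrt n + n * (2 * e K)) / n
      = 2 * K / Real.sqrt n + 2 * e K := by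
    have hs : Real.sqrt n * Real.sqrt n = n := Real.mul_self_sqrt (Nat.cast_nonneg n)
    have h1 : 2 * (K : ℝ) * Real.sqrt n / n = 2 * K / Real.sqrt n := by
      rw [div_eq_div_iff hn0.ne' hsn.ne', mul_assoc, hs]
    have h2 : (n : ℝ) * (2 * e K) / n = 2 * e K := mul_div_cancel_left₀ _ hn0.ne'
    rw [add_div, h1, h2]
  have hdiv : (∫ ω, |∑ i ∈ Finset.range n, ΔM (i + 1) ω| ∂μ) / n
      ≤ (2 * (K : ℝ) * Real.sqrt n + n * (2 * e K)) / n :=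
    (div_le_div_iff_of_pos_right hn0).2 hb
  rw [heq] at hdiv
  have hKe2 : 2 * e K < ε / 2 := by linarith
  linarith
end
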